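/- Let d = 1 and consider a frog model on ℤ where each frog performs an irreducible Markov chain whose every trajectory started at 0 almost surely visits all of ℕ or all of −ℕ (e.g. a nearest-neighbor walk on ℤ with steps ±1). Let (η(x))_{x∈ℤ} be i.i.d. with E[log₊ η(0)] = ∞, independent of the frog trajectories, and suppose each frog started at x hits 0 with probability at least ε^{|x|} for some ε ∈ (0,1). Then waking the frogs at 0 results almost surely in 0 being visited by frogs from infinitely many distinct sites. -/

import Mathlib

open MeasureTheory ProbabilityTheory Filter
open scoped ENNReal NNReal

/-- The set `W_j^v(n,s)` of sites visited for the first time at time `j` by an active frog. -/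
def frogW {V : Type*} (n : V → ℕ) (s : ℕ → V → ℕ → V) (v : V) : ℕ → Set V
  | 0 => {v}
  | j + 1 =>
    {x | (∀ k, ∀ _ : k < j + 1, x ∉ frogW n s v k) ∧
      ∃ k, ∃ _ : k < j + 1, ∃ y ∈ frogW n s v k, ∃ i, 1 ≤ i ∧ i ≤ n y ∧ s (j + 1 - k) y i = x}

lemma mem_frogW_iUnion {V : Type*} (n : V → ℕ) (s : ℕ → V → ℕ → V) (v y : V) {k i t : ℕ}
    (hy : y ∈ frogW n s v k) (hi1 : 1 ≤ i) (hin : i ≤ n y) (ht : 1 ≤ t) :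
    s t y i ∈ ⋃ j, frogW n s v j := by
  by_contra h
  simp only [Set.mem_iUnion, not_exists] at h
  have hmem : s t y i ∈ frogW n s v (k + t - 1 + 1) := by
    rw [frogW, Set.mem_setOf_eq]
    refine ⟨fun k' _ => h k', k, by omega, y, hy, i, hi1, hin, ?_⟩
    rw [show k + t - 1 + 1 - k = t from by omega]
  exact h _ hmem


lemma tail_sum {Ω : Type*} {mΩ : MeasurableSpace Ω} (P : Measure Ω) [IsProbabilityMeasure P]
    (f : Ω → ℝ) (hf : Measurable f) (h0 : ∀ ω, 0 ≤ f ω) (hint : ¬ Integrable f P)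
    (C : ℝ) (hC : 0 < C) :
    ∑' n : ℕ, P {ω | C * (n + 1) ≤ f ω} = ∞ := by
  have hAmeas : ∀ n : ℕ, MeasurableSet {ω | C * (n + 1) ≤ f ω} := fun n =>
    measurableSet_le measurable_const hf
  have hlin : ∫⁻ ω, ENNReal.ofReal (f ω) ∂P = ∞ := by
    by_contra hne
    apply hint
    rw [Integrable, hasFiniteIntegral_iff_ofReal (Filter.Eventually.of_forall h0)]
    exact ⟨hf.aestronglyMeasurable, lt_top_iff_ne_top.2 hne⟩
  by_contra hne
  have hsum : ∑' n : ℕ, P {ω | C * (n + 1) ≤ f ω} < ∞ := lt_top_iff_ne_top.2 hne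
  -- pointwise bound
  have hpt : ∀ ω, ENNReal.ofReal (f ω) ≤
      ENNReal.ofReal C + ∑' n : ℕ, ({ω | C * (n + 1) ≤ f ω}.indicator
        (fun _ => ENNReal.ofReal C) ω) := by
    intro ω
    set k := ⌊f ω / C⌋₊ with hk
    have hfk : f ω ≤ C * (k + 1) := by
      have h1 : f ω / C < k + 1 := Nat.lt_floor_add_one _
      calc f ω = C * (f ω / C) := by field_simp
        _ ≤ C * (k + 1) := by nlinarith [h1, hC]
    have hterm : ∀ n ∈ Finset.range k, ({ω | C * (n + 1) ≤ f ω}.indicator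
        (fun _ => ENNReal.ofReal C) ω) = ENNReal.ofReal C := by
      intro n hn
      rw [Finset.mem_range] at hn
      have : C * (n + 1) ≤ f ω := by
        have h2 : (n + 1 : ℝ) ≤ k := by exact_mod_cast Nat.succ_le_of_lt hn
        have h3 : (k : ℝ) ≤ f ω / C := Nat.floor_le (div_nonneg (h0 ω) hC.le)
        calc C * (n+1) ≤ C * (f ω / C) := by nlinarith
          _ = f ω := by field_simp
      exact Set.indicator_of_mem (show ω ∈ {ω | C * (↑n + 1) ≤ f ω} from this) _
    calc ENNReal.ofReal (f ω) ≤ ENNReal.ofReal (C * (k + 1)) := ENNReal.ofReal_le_ofReal hfk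
      _ = ENNReal.ofReal C + k * ENNReal.ofReal C := by
          rw [← ENNReal.ofReal_natCast k, ← ENNReal.ofReal_mul (by positivity),
            ← ENNReal.ofReal_add (by positivity) (by positivity)]
          ring_nf
      _ ≤ ENNReal.ofReal C + ∑' n : ℕ, ({ω | C * (n + 1) ≤ f ω}.indicator
          (fun _ => ENNReal.ofReal C) ω) := by
          gcongr
          calc (k : ℝ≥0∞) * ENNReal.ofReal C
              = ∑ n ∈ Finset.range k, ENNReal.ofReal C := by
                rw [Finset.sum_const, Finset.card_range, nsmul_eq_mul]
            _ = ∑ n ∈ Finset.range k, ({ω | C * (n + 1) ≤ f ω}.indicator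
                (fun _ => ENNReal.ofReal C) ω) := (Finset.sum_congr rfl hterm).symm
            _ ≤ _ := ENNReal.sum_le_tsum _
  have hle : ∫⁻ ω, ENNReal.ofReal (f ω) ∂P ≤
      ENNReal.ofReal C + ∑' n : ℕ, ENNReal.ofReal C * P {ω | C * (n + 1) ≤ f ω} := by
    calc ∫⁻ ω, ENNReal.ofReal (f ω) ∂P
        ≤ ∫⁻ ω, (ENNReal.ofReal C + ∑' n : ℕ, ({ω | C * (n + 1) ≤ f ω}.indicator
            (fun _ => ENNReal.ofReal C) ω)) ∂P := lintegral_mono hpt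
      _ = ENNReal.ofReal C + ∫⁻ ω, (∑' n : ℕ, ({ω | C * (n + 1) ≤ f ω}.indicator
            (fun _ => ENNReal.ofReal C) ω)) ∂P := by
          rw [lintegral_add_left measurable_const, lintegral_const]
          simp
      _ = ENNReal.ofReal C + ∑' n : ℕ, ∫⁻ ω, ({ω | C * (n + 1) ≤ f ω}.indicator
            (fun _ => ENNReal.ofReal C) ω) ∂P := by
          rw [lintegral_tsum (fun n => ((measurable_const.indicator (hAmeas n))).aemeasurable)]
      _ = ENNReal.ofReal C + ∑' n : ℕ, ENNReal.ofReal C * P {ω | C * (n + 1) ≤ f ω} := by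
          congr 1
          refine tsum_congr fun n => ?_
          rw [lintegral_indicator_const (hAmeas n)]
  rw [hlin] at hle
  have : ENNReal.ofReal C + ∑' n : ℕ, ENNReal.ofReal C * P {ω | C * (n + 1) ≤ f ω} < ∞ := by
    rw [ENNReal.tsum_mul_left]
    refine ENNReal.add_lt_top.2 ⟨ENNReal.ofReal_lt_top, ?_⟩
    exact ENNReal.mul_lt_top ENNReal.ofReal_lt_top hsum
  exact lt_irrefl ⊤ (lt_of_le_of_lt hle this)

lemma condexp_compl_prod {Ω : Type*} {m' : MeasurableSpace Ω} {mΩ : MeasurableSpace Ω}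
    [@StandardBorelSpace Ω mΩ]
    (P : Measure Ω) [IsProbabilityMeasure P]
    (hm' : m' ≤ mΩ)
    (H : ℤ × ℕ → Set Ω) (hH : ∀ p, MeasurableSet[mΩ] (H p))
    (hci : iCondIndepSet m' hm' H P) (F : Finset (ℤ × ℕ)) :
    P⟦⋂ p ∈ F, (H p)ᶜ | m'⟧ =ᵐ[P] ∏ p ∈ F, (1 - P⟦H p | m'⟧) := by
  have h1 : iCondIndep m' hm' (fun p => MeasurableSpace.generateFrom {H p}) P :=
    (iCondIndepSet_iff_iCondIndep m' hm' H P).1 hci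
  have hgle : ∀ p : ℤ × ℕ, MeasurableSpace.generateFrom {H p} ≤ mΩ := fun p =>
    MeasurableSpace.generateFrom_le (fun t ht => by rw [Set.mem_singleton_iff] at ht; exact ht ▸ hH p)
  have h2 := (iCondIndep_iff m' hm' (fun p => MeasurableSpace.generateFrom {H p}) hgle P).1 h1
    F (f := fun p => (H p)ᶜ)
    (fun p _ => (MeasurableSpace.measurableSet_generateFrom (Set.mem_singleton _)).compl)
  have h3 : ∀ p : ℤ × ℕ, P⟦(H p)ᶜ | m'⟧ =ᵐ[P] 1 - P⟦H p | m'⟧ := by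
    intro p
    have hind : (H p)ᶜ.indicator (fun _ => (1:ℝ)) =
        (fun _ => (1:ℝ)) - (H p).indicator (fun _ => (1:ℝ)) := by
      ext ω
      by_cases hω : ω ∈ H p <;>
        simp [Set.indicator_of_mem, Set.indicator_of_notMem, hω]
    rw [hind]
    have hsub := condExp_sub (μ := P) (m := m')
      (integrable_const (1:ℝ)) ((integrable_const (1:ℝ)).indicator (hH p))
    refine hsub.trans ?_
    rw [condExp_const hm' (1:ℝ)]
    rfl
  have h4 : ∀ᵐ ω ∂P, ∀ p ∈ F, (P⟦(H p)ᶜ | m'⟧) ω = (1 - P⟦H p | m'⟧) ω := by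
    simp_rw [← Finset.mem_coe]
    rw [ae_ball_iff F.countable_toSet]
    exact fun p _ => h3 p
  filter_upwards [h2, h4] with ω h2 h4
  rw [h2, Finset.prod_apply, Finset.prod_apply]
  exact Finset.prod_congr rfl h4

lemma side {Ω : Type*} {m' mΩ : MeasurableSpace Ω} [@StandardBorelSpace Ω mΩ]
    (P : Measure Ω) [IsProbabilityMeasure P]
    (η : ℤ → Ω → ℕ) (hηmeas : ∀ x, Measurable (η x))
    (hηiid : iIndepFun η P)
    (hηid : ∀ x, IdentDistrib (η x) (η 0) P P)
    (hηinf : ¬ Integrable (fun ω => Real.log (max (η 0 ω : ℝ) 1)) P)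
    (H : ℤ × ℕ → Set Ω) (hH : ∀ p, MeasurableSet[mΩ] (H p))
    (hm' : m' ≤ mΩ)
    (hηm' : ∀ (x : ℤ) (T : Set ℕ), MeasurableSet[m'] ((η x) ⁻¹' T))
    (hcondindep : iCondIndepSet m' hm' H P)
    (ε : ℝ) (hε0 : 0 < ε) (hε1 : ε < 1)
    (hhit : ∀ p : ℤ × ℕ, 1 ≤ p.2 → ∀ᵐ ω ∂P, ε ^ p.1.natAbs ≤ (P⟦H p | m'⟧) ω)
    (φ : ℕ → ℤ) (habs : ∀ n, (φ n).natAbs = n) :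
    ∀ᵐ ω ∂P, {n : ℕ | ∃ i, 1 ≤ i ∧ i ≤ η (φ n) ω ∧ ω ∈ H (φ n, i)}.Infinite := by
  classical
  have hφinj : Function.Injective φ := fun a b h => by rw [← habs a, ← habs b, h]
  set f : Ω → ℝ := fun ω => Real.log (max (η 0 ω : ℝ) 1) with hfdef
  have hfmeas : Measurable f :=
    Real.measurable_log.comp ((Measurable.of_discrete.comp (hηmeas 0)).max measurable_const)
  have hf0 : ∀ ω, 0 ≤ f ω := fun ω => Real.log_nonneg (le_max_right _ 1)
  set C : ℝ := Real.log ε⁻¹ + 1 with hCdef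
  have hlog : 0 < Real.log ε⁻¹ := Real.log_pos (one_lt_inv_iff₀.2 ⟨hε0, hε1⟩)
  have hC : 0 < C := by rw [hCdef]; linarith
  have hts : ∑' n : ℕ, P {ω | C * (n + 1) ≤ f ω} = ∞ :=
    tail_sum P f hfmeas hf0 hηinf C hC
  set T : ℕ → Set ℕ := fun n => {m : ℕ | C * (n + 1) ≤ Real.log (max (m : ℝ) 1)} with hTdef
  set G : ℕ → Set Ω := fun n => (η (φ n)) ⁻¹' T n with hGdef
  have hGm' : ∀ n, MeasurableSet[m'] (G n) := fun n => hηm' _ _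
  have hGmeas : ∀ n, MeasurableSet[mΩ] (G n) := fun n => hm' _ (hGm' n)
  have hPG : ∀ n, P (G n) = P {ω | C * (n + 1) ≤ f ω} := fun n =>
    (hηid (φ n)).measure_mem_eq (MeasurableSet.of_discrete)
  have hGsum : ∑' n, P (G n) = ∞ := by rw [tsum_congr hPG]; exact hts
  -- independence of the G n
  have hGind : iIndepSet G P := by
    rw [iIndepSet_iff]
    intro s g hg
    have hle : ∀ n : ℕ, MeasurableSpace.generateFrom {G n} ≤
        MeasurableSpace.comap (η (φ n)) inferInstance := fun n =>
      MeasurableSpace.generateFrom_le (fun t ht => by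
        rw [Set.mem_singleton_iff] at ht
        exact ht ▸ ⟨T n, MeasurableSet.of_discrete, rfl⟩)
    have key := hηiid.meas_biInter (S := s.image φ) (s := fun x => g x.natAbs) ?_
    · rw [Finset.set_biInter_finset_image, Finset.prod_image
        (fun a _ b _ h => hφinj h)] at key
      simp only [habs] at key
      exact key
    · intro x hx
      rw [Finset.mem_image] at hx
      obtain ⟨n, hn, rfl⟩ := hx
      show MeasurableSet[MeasurableSpace.comap (η (φ n)) inferInstance] (g (φ n).natAbs)
      rw [habs]
      exact hle n _ (hg n hn)
  have hlimsup : P (limsup G atTop) = 1 := measure_limsup_eq_one hGmeas hGind hGsum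
  have hlimmeas : MeasurableSet[mΩ] (limsup G atTop) := MeasurableSet.measurableSet_limsup hGmeas
  -- thresholds
  set mm : ℕ → ℕ := fun n => ⌈(ε ^ n)⁻¹⌉₊ with hmmdef
  have hmm1 : ∀ n, (1:ℝ) ≤ (ε ^ n) * mm n := by
    intro n
    have h1 : (ε ^ n)⁻¹ ≤ (mm n : ℝ) := Nat.le_ceil _
    have h2 : 0 < ε ^ n := pow_pos hε0 n
    calc (1:ℝ) = (ε ^ n) * (ε ^ n)⁻¹ := by field_simp
      _ ≤ (ε ^ n) * mm n := by nlinarith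
  -- G n forces many frogs
  have hGsub : ∀ n (ω : Ω), ω ∈ G n → mm n ≤ η (φ n) ω := by
    intro n ω hω
    have hω' : C * (n + 1) ≤ Real.log (max ((η (φ n) ω : ℕ) : ℝ) 1) := hω
    set a : ℝ := ((η (φ n) ω : ℕ) : ℝ) with hadef
    have ha0 : 0 ≤ a := by positivity
    have hmax : Real.exp (C * (n + 1)) ≤ max a 1 := by
      rw [← Real.exp_log (show (0:ℝ) < max a 1 by positivity)]
      exact Real.exp_le_exp.2 hω'
    have hexp1 : (1:ℝ) < Real.exp (C * (n + 1)) := by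
      rw [← Real.exp_zero]
      exact Real.exp_lt_exp.2 (by positivity)
    have hmaxa : max a 1 = a := by
      rcases max_cases a 1 with ⟨h1, _⟩ | ⟨h1, h2⟩
      · exact h1
      · linarith
    have hbound : (mm n : ℝ) ≤ Real.exp (C * (n + 1)) := by
      have h1 : (mm n : ℝ) < (ε ^ n)⁻¹ + 1 := Nat.ceil_lt_add_one (by positivity)
      have h2 : Real.exp (C * (n + 1)) = (ε⁻¹) ^ (n + 1) * Real.exp ((n : ℝ) + 1) := by
        rw [hCdef, add_mul, one_mul, Real.exp_add]
        congr 1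
        rw [mul_comm, show ((n:ℝ) + 1) = ((n + 1 : ℕ) : ℝ) by push_cast; ring,
          Real.exp_nat_mul, Real.exp_log (by positivity)]
      have hi : (1:ℝ) ≤ ε⁻¹ := one_le_inv_iff₀.2 ⟨hε0, hε1.le⟩
      have h4 : (ε ^ n)⁻¹ = (ε⁻¹) ^ n := by rw [inv_pow]
      have h5 : (ε⁻¹) ^ n ≤ (ε⁻¹) ^ (n + 1) := pow_le_pow_right₀ hi (by omega)
      have h6 : (2:ℝ) ≤ Real.exp ((n : ℝ) + 1) := by
        have h7 := Real.add_one_le_exp ((n : ℝ) + 1)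
        have h8 : (0:ℝ) ≤ (n : ℝ) := Nat.cast_nonneg n
        linarith
      have h7 : (1:ℝ) ≤ (ε⁻¹) ^ (n + 1) := one_le_pow₀ hi
      rw [h2]
      nlinarith
    have h9 : (mm n : ℝ) ≤ a := by rw [← hmaxa]; linarith
    rw [hadef] at h9
    exact_mod_cast h9
  have hfac : ∀ n, (1 - ε ^ n) ^ (mm n) ≤ Real.exp (-1) := by
    intro n
    have hp1 : ε ^ n ≤ 1 := pow_le_one₀ hε0.le hε1.le
    have h2 : (0:ℝ) ≤ 1 - ε ^ n := by linarith
    have h3 : 1 - ε ^ n ≤ Real.exp (-(ε ^ n)) := by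
      have := Real.add_one_le_exp (-(ε ^ n)); linarith
    calc (1 - ε ^ n) ^ mm n ≤ Real.exp (-(ε ^ n)) ^ mm n := pow_le_pow_left₀ h2 h3 _
      _ = Real.exp ((mm n : ℝ) * (-(ε ^ n))) := by rw [Real.exp_nat_mul]
      _ ≤ Real.exp (-1) := Real.exp_le_exp.2 (by nlinarith [hmm1 n])
  have hexpm1 : Real.exp (-1) ≤ 1 := by
    rw [Real.exp_le_one_iff]; norm_num
  -- condexp bounds
  have hqle1 : ∀ p : ℤ × ℕ, (P⟦H p | m'⟧) ≤ᵐ[P] fun _ => (1:ℝ) := by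
    intro p
    have h := condExp_mono (μ := P) (m := m')
      ((integrable_const (1:ℝ)).indicator (hH p)) (integrable_const (1:ℝ))
      (Filter.Eventually.of_forall fun ω =>
        Set.indicator_apply_le' (fun _ => le_refl 1) (fun _ => zero_le_one))
    rw [condExp_const hm' (1:ℝ)] at h
    exact h
  set F : Finset ℕ → Finset (ℤ × ℕ) := fun E =>
    E.biUnion (fun n => (Finset.Icc 1 (mm n)).image (fun i => (φ n, i))) with hFdef
  have hF2 : ∀ E : Finset ℕ, ∀ p ∈ F E, 1 ≤ p.2 := by
    intro E p hp
    rw [hFdef, Finset.mem_biUnion] at hp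
    obtain ⟨n, _, hp⟩ := hp
    rw [Finset.mem_image] at hp
    obtain ⟨i, hi, rfl⟩ := hp
    exact (Finset.mem_Icc.1 hi).1
  have hcondbound : ∀ E : Finset ℕ,
      ∀ᵐ ω ∂P, (P⟦⋂ p ∈ F E, (H p)ᶜ | m'⟧) ω ≤ Real.exp (-1) ^ E.card := by
    intro E
    have hprod := condexp_compl_prod P hm' H hH hcondindep (F E)
    have hhitall : ∀ᵐ ω ∂P, ∀ p ∈ (F E : Set (ℤ × ℕ)), ε ^ p.1.natAbs ≤ (P⟦H p | m'⟧) ω := by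
      rw [ae_ball_iff (F E).countable_toSet]
      intro p hp
      exact hhit p (hF2 E p hp)
    have hle1all : ∀ᵐ ω ∂P, ∀ p ∈ (F E : Set (ℤ × ℕ)), (P⟦H p | m'⟧) ω ≤ 1 := by
      rw [ae_ball_iff (F E).countable_toSet]
      intro p _
      exact hqle1 p
    filter_upwards [hprod, hhitall, hle1all] with ω hω h1 h2
    rw [hω, Finset.prod_apply]
    have hstep : ∀ p ∈ F E, (1 - P⟦H p | m'⟧) ω ≤ 1 - ε ^ p.1.natAbs := by
      intro p hp
      have := h1 p hp
      simp only [Pi.sub_apply, Pi.one_apply]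
      linarith
    have hnn : ∀ p ∈ F E, (0:ℝ) ≤ (1 - P⟦H p | m'⟧) ω := by
      intro p hp
      have := h2 p hp
      simp only [Pi.sub_apply, Pi.one_apply]
      linarith
    have hεle1 : ∀ p : ℤ × ℕ, (0:ℝ) ≤ 1 - ε ^ p.1.natAbs := by
      intro p
      have : ε ^ p.1.natAbs ≤ 1 := pow_le_one₀ hε0.le hε1.le
      linarith
    calc ∏ p ∈ F E, (1 - P⟦H p | m'⟧) ω
        ≤ ∏ p ∈ F E, (1 - ε ^ p.1.natAbs) := Finset.prod_le_prod hnn hstep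
      _ = ∏ n ∈ E, (1 - ε ^ n) ^ (mm n) := by
          rw [hFdef, Finset.prod_biUnion ?_]
          · refine Finset.prod_congr rfl fun n _ => ?_
            rw [Finset.prod_image (fun a _ b _ h => by
              injection h with h1 h2)]
            simp only [habs]
            rw [Finset.prod_const, Nat.card_Icc]
            simp
          · intro a _ b _ hab
            simp only [Finset.disjoint_left, Finset.mem_image]
            rintro p ⟨i, _, rfl⟩ ⟨j, _, hpj⟩
            injection hpj with hx hy
            exact hab (hφinj hx.symm)
      _ ≤ ∏ n ∈ E, Real.exp (-1) :=
          Finset.prod_le_prod (fun n _ => pow_nonneg (by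
            have : ε ^ n ≤ 1 := pow_le_one₀ hε0.le hε1.le; linarith) _)
            (fun n _ => hfac n)
      _ = Real.exp (-1) ^ E.card := Finset.prod_const _
  -- the events A n
  set A : ℕ → Set Ω := fun n => {ω | ∃ i, 1 ≤ i ∧ i ≤ η (φ n) ω ∧ ω ∈ H (φ n, i)} with hAdef
  have hAmeas : ∀ n, MeasurableSet[mΩ] (A n) := by
    intro n
    have hA : A n = ⋃ i : ℕ, ⋃ (_ : 1 ≤ i), ((η (φ n)) ⁻¹' Set.Ici i ∩ H (φ n, i)) := by
      ext ω
      simp only [hAdef, Set.mem_setOf_eq, Set.mem_iUnion, Set.mem_inter_iff, Set.mem_preimage,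
        Set.mem_Ici]
      tauto
    rw [hA]
    exact MeasurableSet.iUnion fun i => MeasurableSet.iUnion fun _ =>
      ((hηmeas (φ n)) MeasurableSet.of_discrete).inter (hH _)
  set Bad : ℕ → Set Ω := fun N => ⋂ (n : ℕ), ⋂ (_ : N ≤ n), (A n)ᶜ with hBaddef
  -- the key bound
  have hkey : ∀ N k : ℕ, P (limsup G atTop ∩ Bad N) ≤ ENNReal.ofReal (Real.exp (-1) ^ k) := by
    intro N k
    set CE : ℕ → Finset ℕ → Set Ω := fun L E =>
      {ω | ∀ n ∈ Finset.Icc N L, (ω ∈ G n ↔ n ∈ E)} with hCEdef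
    set SS : ℕ → Finset (Finset ℕ) := fun L =>
      (Finset.Icc N L).powerset.filter (fun E => k ≤ E.card) with hSSdef
    set D : ℕ → Set Ω := fun L => ⋃ E ∈ SS L, CE L E with hDdef
    have hCEm' : ∀ L E, MeasurableSet[m'] (CE L E) := by
      intro L E
      have : CE L E = ⋂ n ∈ (Finset.Icc N L : Set ℕ),
          (if n ∈ E then G n else (G n)ᶜ) := by
        ext ω
        simp only [hCEdef, Set.mem_setOf_eq, Set.mem_iInter, Finset.mem_coe]
        constructor
        · intro h n hn
          by_cases hE : n ∈ E <;> simp [hE, h n hn]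
        · intro h n hn
          have := h n hn
          by_cases hE : n ∈ E <;> simp [hE] at this <;> simp [hE, this]
      rw [this]
      refine MeasurableSet.biInter (Set.to_countable _) fun n _ => ?_
      by_cases hE : n ∈ E <;> simp only [hE, if_true, if_false]
      · exact hGm' n
      · exact (hGm' n).compl
    -- per-cell bound
    have hreal : ∀ L : ℕ, ∀ E ∈ SS L,
        P (CE L E ∩ Bad N) ≤ ENNReal.ofReal (Real.exp (-1) ^ k * (P (CE L E)).toReal) := by
      intro L E hE
      rw [hSSdef, Finset.mem_filter, Finset.mem_powerset] at hE
      obtain ⟨hEsub, hEcard⟩ := hE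
      set X : Set Ω := ⋂ p ∈ F E, (H p)ᶜ with hXdef
      have hXmeas : MeasurableSet[mΩ] X :=
        MeasurableSet.biInter (F E).countable_toSet fun p _ => (hH p).compl
      have hCEmeas : MeasurableSet[mΩ] (CE L E) := hm' _ (hCEm' L E)
      have hsub : CE L E ∩ Bad N ⊆ CE L E ∩ X := by
        rintro ω ⟨hCE, hBad⟩
        refine ⟨hCE, ?_⟩
        rw [hXdef]
        simp only [Set.mem_iInter, Set.mem_compl_iff]
        intro p hp
        rw [hFdef, Finset.mem_biUnion] at hp
        obtain ⟨n, hnE, hp⟩ := hp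
        rw [Finset.mem_image] at hp
        obtain ⟨i, hi, rfl⟩ := hp
        rw [Finset.mem_Icc] at hi
        have hnIcc : n ∈ Finset.Icc N L := hEsub hnE
        have hGn : ω ∈ G n := (hCE n hnIcc).2 hnE
        have hη : mm n ≤ η (φ n) ω := hGsub n ω hGn
        intro hH'
        have hωA : ω ∈ A n := ⟨i, hi.1, le_trans hi.2 hη, hH'⟩
        have hN : N ≤ n := (Finset.mem_Icc.1 hnIcc).1
        have := Set.mem_iInter.1 (Set.mem_iInter.1 hBad n) hN
        exact this hωA
      have hpow : Real.exp (-1) ^ E.card ≤ Real.exp (-1) ^ k :=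
        pow_le_pow_of_le_one (Real.exp_pos _).le hexpm1 hEcard
      have hint : Integrable (X.indicator (fun _ => (1:ℝ))) P :=
        (integrable_const 1).indicator hXmeas
      have h1 : ∫ ω in CE L E, X.indicator (fun _ => (1:ℝ)) ω ∂P = (P (CE L E ∩ X)).toReal := by
        rw [setIntegral_indicator hXmeas, setIntegral_const]
        simp
        rfl
      have h2 : ∫ ω in CE L E, X.indicator (fun _ => (1:ℝ)) ω ∂P
          = ∫ ω in CE L E, (P⟦X | m'⟧) ω ∂P := (setIntegral_condExp hm' hint (hCEm' L E)).symm
      have h3 : ∫ ω in CE L E, (P⟦X | m'⟧) ω ∂P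
          ≤ ∫ ω in CE L E, (fun _ => Real.exp (-1) ^ k) ω ∂P := by
        refine integral_mono_ae (integrable_condExp.restrict) (integrable_const _) ?_
        refine ae_restrict_of_ae ((hcondbound E).mono fun ω h => ?_)
        exact h.trans hpow
      have h4 : ∫ ω in CE L E, (fun _ => Real.exp (-1) ^ k) ω ∂P
          = (P (CE L E)).toReal * Real.exp (-1) ^ k := by
        rw [setIntegral_const]; simp [smul_eq_mul]; rfl
      have h5 : (P (CE L E ∩ Bad N)).toReal ≤ Real.exp (-1) ^ k * (P (CE L E)).toReal := by
        have hm1 : (P (CE L E ∩ Bad N)).toReal ≤ (P (CE L E ∩ X)).toReal :=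
          ENNReal.toReal_mono (measure_ne_top P _) (measure_mono hsub)
        rw [← h1, h2] at hm1
        calc (P (CE L E ∩ Bad N)).toReal ≤ ∫ ω in CE L E, (P⟦X | m'⟧) ω ∂P := hm1
          _ ≤ (P (CE L E)).toReal * Real.exp (-1) ^ k := by rw [← h4]; exact h3
          _ = Real.exp (-1) ^ k * (P (CE L E)).toReal := by ring
      rw [← ENNReal.ofReal_toReal (measure_ne_top P (CE L E ∩ Bad N))]
      exact ENNReal.ofReal_le_ofReal h5
    -- disjointness
    have hdisj : ∀ L, ((SS L : Set (Finset ℕ))).PairwiseDisjoint (fun E => CE L E) := by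
      intro L E hE E' hE' hne
      rw [Finset.mem_coe, hSSdef, Finset.mem_filter, Finset.mem_powerset] at hE hE'
      rw [Function.onFun, Set.disjoint_left]
      intro ω hω hω'
      apply hne
      ext n
      by_cases hn : n ∈ Finset.Icc N L
      · rw [← (hω n hn), ← (hω' n hn)]
      · constructor
        · intro h; exact absurd (hE.1 h) hn
        · intro h; exact absurd (hE'.1 h) hn
    -- sum bound for D L
    have hDL : ∀ L, P (D L ∩ Bad N) ≤ ENNReal.ofReal (Real.exp (-1) ^ k) := by
      intro L
      have hsub : D L ∩ Bad N ⊆ ⋃ E ∈ SS L, (CE L E ∩ Bad N) := by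
        rintro ω ⟨hD, hBad⟩
        rw [hDdef] at hD
        simp only [Set.mem_iUnion] at hD ⊢
        obtain ⟨E, hE, hω⟩ := hD
        exact ⟨E, hE, hω, hBad⟩
      have hsum1 : ∑ E ∈ SS L, P (CE L E) ≤ 1 := by
        rw [← measure_biUnion_finset (hdisj L) (fun E _ => hm' _ (hCEm' L E))]
        exact prob_le_one
      have hsum2 : ∑ E ∈ SS L, (P (CE L E)).toReal ≤ 1 := by
        rw [← ENNReal.toReal_sum (fun E _ => measure_ne_top P _)]
        exact ENNReal.toReal_le_of_le_ofReal zero_le_one (by simpa using hsum1)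
      calc P (D L ∩ Bad N) ≤ ∑ E ∈ SS L, P (CE L E ∩ Bad N) :=
            (measure_mono hsub).trans (measure_biUnion_finset_le _ _)
        _ ≤ ∑ E ∈ SS L, ENNReal.ofReal (Real.exp (-1) ^ k * (P (CE L E)).toReal) :=
            Finset.sum_le_sum (hreal L)
        _ = ENNReal.ofReal (∑ E ∈ SS L, Real.exp (-1) ^ k * (P (CE L E)).toReal) :=
            (ENNReal.ofReal_sum_of_nonneg (fun E _ => by positivity)).symm
        _ ≤ ENNReal.ofReal (Real.exp (-1) ^ k) := by
            apply ENNReal.ofReal_le_ofReal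
            rw [← Finset.mul_sum]
            nlinarith [hsum2, Finset.sum_nonneg
              (fun E (_ : E ∈ SS L) => ENNReal.toReal_nonneg (a := P (CE L E))),
              pow_nonneg (Real.exp_pos (-1)).le k]
    -- monotone union covers
    have hinc : limsup G atTop ∩ Bad N ⊆ ⋃ L, (D L ∩ Bad N) := by
      rintro ω ⟨hlim, hBad⟩
      have hfreq : {n : ℕ | ω ∈ G n}.Infinite := by
        rw [← Nat.frequently_atTop_iff_infinite]
        exact mem_limsup_iff_frequently_mem.1 hlim
      have hinf2 : ({n : ℕ | ω ∈ G n} \ {n | n < N}).Infinite :=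
        hfreq.diff (Set.finite_lt_nat N)
      obtain ⟨t, htsub, htcard⟩ := hinf2.exists_subset_card_eq k
      set L : ℕ := N + t.sup id with hLdef
      set E : Finset ℕ := (Finset.Icc N L).filter (fun n => ω ∈ G n) with hEdef
      have htE : t ⊆ E := by
        intro n hn
        have hn' := htsub hn
        simp only [Set.mem_diff, Set.mem_setOf_eq, not_lt] at hn'
        rw [hEdef, Finset.mem_filter, Finset.mem_Icc]
        refine ⟨⟨hn'.2, ?_⟩, hn'.1⟩
        calc n = id n := rfl
          _ ≤ t.sup id := Finset.le_sup hn
          _ ≤ L := by rw [hLdef]; omega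
      have hEcard : k ≤ E.card := htcard ▸ Finset.card_le_card htE
      refine Set.mem_iUnion.2 ⟨L, ?_, hBad⟩
      rw [hDdef]
      refine Set.mem_iUnion.2 ⟨E, Set.mem_iUnion.2 ⟨?_, ?_⟩⟩
      · rw [hSSdef, Finset.mem_filter, Finset.mem_powerset]
        exact ⟨Finset.filter_subset _ _, hEcard⟩
      · intro n hn
        rw [hEdef, Finset.mem_filter]
        constructor
        · intro h; exact ⟨hn, h⟩
        · intro h; exact h.2
    have hmono : Monotone (fun L => D L ∩ Bad N) := by
      intro L L' hLL'
      refine Set.inter_subset_inter ?_ (subset_refl _)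
      intro ω hω
      rw [hDdef] at hω ⊢
      simp only [Set.mem_iUnion] at hω ⊢
      obtain ⟨E, hE, hω⟩ := hω
      rw [hSSdef, Finset.mem_filter, Finset.mem_powerset] at hE
      set E' : Finset ℕ := (Finset.Icc N L').filter (fun n => ω ∈ G n) with hE'def
      have hEE' : E ⊆ E' := by
        intro n hn
        have hnIcc : n ∈ Finset.Icc N L := hE.1 hn
        rw [Finset.mem_Icc] at hnIcc
        rw [hE'def, Finset.mem_filter, Finset.mem_Icc]
        exact ⟨⟨hnIcc.1, hnIcc.2.trans hLL'⟩, (hω n (hE.1 hn)).2 hn⟩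
      refine ⟨E', ?_, ?_⟩
      · rw [hSSdef, Finset.mem_filter, Finset.mem_powerset]
        exact ⟨Finset.filter_subset _ _, hE.2.trans (Finset.card_le_card hEE')⟩
      · intro n hn
        rw [hE'def, Finset.mem_filter]
        constructor
        · intro h; exact ⟨hn, h⟩
        · intro h; exact h.2
    calc P (limsup G atTop ∩ Bad N) ≤ P (⋃ L, (D L ∩ Bad N)) := measure_mono hinc
      _ = ⨆ L, P (D L ∩ Bad N) := hmono.measure_iUnion
      _ ≤ ENNReal.ofReal (Real.exp (-1) ^ k) := iSup_le hDL
  -- conclude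
  have hbadnull : ∀ N, P (limsup G atTop ∩ Bad N) = 0 := by
    intro N
    have htend : Tendsto (fun k : ℕ => ENNReal.ofReal (Real.exp (-1) ^ k)) atTop (nhds 0) := by
      rw [← ENNReal.ofReal_zero]
      apply ENNReal.tendsto_ofReal
      exact tendsto_pow_atTop_nhds_zero_of_lt_one (Real.exp_pos _).le
        (by rw [Real.exp_lt_one_iff]; norm_num)
    have hle : P (limsup G atTop ∩ Bad N) ≤ 0 :=
      ge_of_tendsto htend (Filter.Eventually.of_forall (hkey N))
    exact le_antisymm hle zero_le
  have h1 : ∀ᵐ ω ∂P, ω ∈ limsup G atTop := by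
    have hcompl : P (limsup G atTop)ᶜ = 0 := by
      rw [measure_compl hlimmeas (measure_ne_top _ _), hlimsup]
      simp
    rw [ae_iff]
    simpa [Set.compl_def] using hcompl
  have h2 : ∀ᵐ ω ∂P, ∀ N, ω ∉ limsup G atTop ∩ Bad N :=
    ae_all_iff.2 fun N => measure_eq_zero_iff_ae_notMem.1 (hbadnull N)
  filter_upwards [h1, h2] with ω hω1 hω2
  rw [show {n : ℕ | ∃ i, 1 ≤ i ∧ i ≤ η (φ n) ω ∧ ω ∈ H (φ n, i)} = {n : ℕ | ω ∈ A n} from rfl,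
    ← Nat.frequently_atTop_iff_infinite, frequently_atTop]
  intro N
  have hnotbad : ω ∉ Bad N := fun hbad => hω2 N ⟨hω1, hbad⟩
  rw [hBaddef] at hnotbad
  simp only [Set.mem_iInter, Set.mem_compl_iff, not_forall, not_not] at hnotbad
  obtain ⟨n, hNn, hn⟩ := hnotbad
  exact ⟨n, hNn, hn⟩

/-- One-dimensional frog model: each frog trajectory started at `0` a.s.
covers all of `ℕ` or all of `-ℕ`; the frog numbers `(η x)_{x ∈ ℤ}` are i.i.d. with
`E[log₊ η(0)] = ∞` and independent of the trajectories; and each frog started at `x` hits `0`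
with conditional probability (given `η`) at least `ε^{|x|}`, independently over the frogs.
Then, waking the frogs at `0`, almost surely `0` is visited by frogs from infinitely many
distinct sites. -/
theorem stmt18 {Ω : Type*} {mΩ : MeasurableSpace Ω} [StandardBorelSpace Ω]
    (P : Measure Ω) [IsProbabilityMeasure P]
    (η : ℤ → Ω → ℕ) (hηmeas : ∀ x, Measurable (η x))
    (hηiid : ProbabilityTheory.iIndepFun η P)
    (hηid : ∀ x, ProbabilityTheory.IdentDistrib (η x) (η 0) P P)
    (hηinf : ¬ Integrable (fun ω => Real.log (max (η 0 ω : ℝ) 1)) P)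
    (S : ℕ → ℤ → ℕ → Ω → ℤ) (hSmeas : ∀ j x i, Measurable (S j x i))
    (hS0 : ∀ x i ω, S 0 x i ω = x)
    (hηSindep : ProbabilityTheory.Indep
      (MeasurableSpace.comap (fun ω => fun x : ℤ => η x ω) inferInstance)
      (MeasurableSpace.comap (fun ω => fun p : ℕ × ℤ × ℕ => S p.1 p.2.1 p.2.2 ω)
        inferInstance) P)
    (hcover : ∀ i : ℕ, 1 ≤ i →
      ∀ᵐ ω ∂P, (∀ m : ℕ, ∃ j, S j 0 i ω = (m : ℤ)) ∨ (∀ m : ℕ, ∃ j, S j 0 i ω = -(m : ℤ)))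
    (ε : ℝ) (hε0 : 0 < ε) (hε1 : ε < 1)
    (hmηle : MeasurableSpace.comap (fun ω => fun x : ℤ => η x ω) inferInstance ≤ mΩ)
    (hcondindep : ProbabilityTheory.iCondIndepSet
      (MeasurableSpace.comap (fun ω => fun x : ℤ => η x ω) inferInstance) hmηle
      (fun p : ℤ × ℕ => {ω | ∃ j, S j p.1 p.2 ω = 0}) P)
    (hhit : ∀ (x : ℤ) (i : ℕ), 1 ≤ i →
      ∀ᵐ ω ∂P, ε ^ x.natAbs ≤
        (MeasureTheory.condExp
          (MeasurableSpace.comap (fun ω' => fun x' : ℤ => η x' ω') inferInstance) P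
          (Set.indicator {ω' | ∃ j, S j x i ω' = 0} fun _ => (1 : ℝ))) ω) :
    ∀ᵐ ω ∂P, 1 ≤ η 0 ω →
      {x : ℤ | (x ∈ ⋃ j : ℕ, frogW (fun z => η z ω) (fun j z i => S j z i ω) 0 j) ∧
        ∃ i, 1 ≤ i ∧ i ≤ η x ω ∧ ∃ j, S j x i ω = 0}.Infinite := by
    classical
  set Gm := MeasurableSpace.comap (fun ω => fun x : ℤ => η x ω) inferInstance with hGm
  set H : ℤ × ℕ → Set Ω := fun p => {ω | ∃ j, S j p.1 p.2 ω = 0} with hHdef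
  have hHmeas : ∀ p, MeasurableSet[mΩ] (H p) := by
    intro p
    have h : H p = ⋃ j, (S j p.1 p.2) ⁻¹' {0} := by ext ω; simp [hHdef]
    rw [h]
    exact MeasurableSet.iUnion fun j => (hSmeas j p.1 p.2) (measurableSet_singleton 0)
  have hηm' : ∀ (x : ℤ) (T : Set ℕ), MeasurableSet[Gm] ((η x) ⁻¹' T) := by
    intro x T
    exact ⟨(fun g : ℤ → ℕ => g x) ⁻¹' T,
      (measurable_pi_apply x) MeasurableSet.of_discrete, rfl⟩
  have hhit' : ∀ p : ℤ × ℕ, 1 ≤ p.2 → ∀ᵐ ω ∂P, ε ^ p.1.natAbs ≤ (P⟦H p | Gm⟧) ω :=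
    fun p hp => hhit p.1 p.2 hp
  have hpos := side P η hηmeas hηiid hηid hηinf H hHmeas hmηle hηm' hcondindep ε hε0 hε1 hhit'
    (fun n : ℕ => (n : ℤ)) (fun n => Int.natAbs_natCast n)
  have hneg := side P η hηmeas hηiid hηid hηinf H hHmeas hmηle hηm' hcondindep ε hε0 hε1 hhit'
    (fun n : ℕ => -(n : ℤ)) (fun n => by simp)
  have hcov := hcover 1 le_rfl
  filter_upwards [hpos, hneg, hcov] with ω hp hn hc hη0
  have hinj1 : Set.InjOn (fun k : ℕ => (k : ℤ)) {k : ℕ | ∃ i, 1 ≤ i ∧ i ≤ η ((k : ℕ) : ℤ) ω ∧ ω ∈ H (((k : ℕ) : ℤ), i)} :=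
    fun a _ b _ h => by have h' : ((a:ℕ):ℤ) = ((b:ℕ):ℤ) := h; omega
  have hinj2 : Set.InjOn (fun k : ℕ => -(k : ℤ)) {k : ℕ | ∃ i, 1 ≤ i ∧ i ≤ η (-(k : ℕ) : ℤ) ω ∧ ω ∈ H ((-(k : ℕ) : ℤ), i)} :=
    fun a _ b _ h => by have h' : (-(a:ℕ):ℤ) = (-(b:ℕ):ℤ) := h; omega
  have h00 : (0:ℤ) ∈ frogW (fun z => η z ω) (fun j z i => S j z i ω) 0 0 := by
    rw [frogW]; exact rfl
  rcases hc with hr | hl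
  · -- covering to the right
    refine Set.Infinite.mono ?_ (Set.Infinite.image hinj1 hp)
    rintro x ⟨k, hk, hxk⟩
    have hxk' : ((k:ℕ):ℤ) = x := hxk
    subst hxk'
    constructor
    · rcases Nat.eq_zero_or_pos k with rfl | hkpos
      · exact Set.mem_iUnion.2 ⟨0, h00⟩
      · obtain ⟨j, hj⟩ := hr k
        have hj1 : 1 ≤ j := by
          rcases Nat.eq_zero_or_pos j with rfl | h
          · rw [hS0] at hj; omega
          · exact h
        have hmem := mem_frogW_iUnion (fun z => η z ω) (fun j z i => S j z i ω) 0 0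
          (k := 0) (i := 1) (t := j) h00 le_rfl hη0 hj1
        rw [← hj]
        exact hmem
    · obtain ⟨i, h1, h2, h3⟩ := hk
      exact ⟨i, h1, h2, h3⟩
  · -- covering to the left
    refine Set.Infinite.mono ?_ (Set.Infinite.image hinj2 hn)
    rintro x ⟨k, hk, hxk⟩
    have hxk' : (-(k:ℕ):ℤ) = x := hxk
    subst hxk'
    constructor
    · rcases Nat.eq_zero_or_pos k with rfl | hkpos
      · exact Set.mem_iUnion.2 ⟨0, by simpa using h00⟩
      · obtain ⟨j, hj⟩ := hl k
        have hj1 : 1 ≤ j := by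
          rcases Nat.eq_zero_or_pos j with rfl | h
          · rw [hS0] at hj; omega
          · exact h
        have hmem := mem_frogW_iUnion (fun z => η z ω) (fun j z i => S j z i ω) 0 0
          (k := 0) (i := 1) (t := j) h00 le_rfl hη0 hj1
        rw [← hj]
        exact hmem
    · obtain ⟨i, h1, h2, h3⟩ := hk
      exact ⟨i, h1, h2, h3⟩
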